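/- The join operator ⊔ on the symbolic lattice L is associative: for all l₁, l₂, l₃ ∈ L, (l₁ ⊔ l₂) ⊔ l₃ = l₁ ⊔ (l₂ ⊔ l₃). -/
import Mathlib


inductive SymExpr (P U B F : Type*) where
  | bot : SymExpr P U B F
  | top : SymExpr P U B F
  | prim : P → SymExpr P U B F
  | unop : U → SymExpr P U B F → SymExpr P U B F
  | binop : B → SymExpr P U B F → SymExpr P U B F → SymExpr P U B F
  | fn : F → List (SymExpr P U B F) → SymExpr P U B F
  | phi : List (SymExpr P U B F) → SymExpr P U B F

namespace SymExpr

variable {P U B F : Type*}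

/-- The partial order `⊑` on the symbolic lattice. -/
inductive Le : SymExpr P U B F → SymExpr P U B F → Prop where
  | bot (l) : Le .bot l
  | top (l) : Le l .top
  | prim (p : P) : Le (.prim p) (.prim p)
  | unop {l l'} (u : U) : Le l l' → Le (.unop u l) (.unop u l')
  | binop {l₁ l₂ l₁' l₂'} (b : B) : Le l₁ l₁' → Le l₂ l₂' →
      Le (.binop b l₁ l₂) (.binop b l₁' l₂')
  | fn {ls ls'} (f : F) : List.Forall₂ Le ls ls' → Le (.fn f ls) (.fn f ls')
  | phi {ls ls'} : List.Forall₂ Le ls ls' → Le (.phi ls) (.phi ls')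

attribute [local instance] Classical.propDecidable

mutual
noncomputable def join : SymExpr P U B F → SymExpr P U B F → SymExpr P U B F
  | .bot, l => l
  | l, .bot => l
  | .prim p, .prim p' => if p = p' then .prim p else .top
  | .unop u l, .unop u' l' => if u = u' then .unop u (join l l') else .top
  | .binop b l₁ l₂, .binop b' l₁' l₂' =>
      if b = b' then .binop b (join l₁ l₁') (join l₂ l₂') else .top
  | .fn f ls, .fn f' ls' =>
      if f = f' ∧ ls.length = ls'.length then .fn f (joinList ls ls') else .top
  | .phi ls, .phi ls' =>
      if ls.length = ls'.length then .phi (joinList ls ls') else .top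
  | _, _ => .top

noncomputable def joinList : List (SymExpr P U B F) → List (SymExpr P U B F) → List (SymExpr P U B F)
  | l :: ls, l' :: ls' => join l l' :: joinList ls ls'
  | _, _ => []
end

mutual
noncomputable def meet : SymExpr P U B F → SymExpr P U B F → SymExpr P U B F
  | .top, l => l
  | l, .top => l
  | .prim p, .prim p' => if p = p' then .prim p else .bot
  | .unop u l, .unop u' l' => if u = u' then .unop u (meet l l') else .bot
  | .binop b l₁ l₂, .binop b' l₁' l₂' =>
      if b = b' then .binop b (meet l₁ l₁') (meet l₂ l₂') else .bot
  | .fn f ls, .fn f' ls' =>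
      if f = f' ∧ ls.length = ls'.length then .fn f (meetList ls ls') else .bot
  | .phi ls, .phi ls' =>
      if ls.length = ls'.length then .phi (meetList ls ls') else .bot
  | _, _ => .bot

noncomputable def meetList : List (SymExpr P U B F) → List (SymExpr P U B F) → List (SymExpr P U B F)
  | l :: ls, l' :: ls' => meet l l' :: meetList ls ls'
  | _, _ => []
end

mutual
def depth : SymExpr P U B F → ℕ
  | .bot => 0
  | .top => 0
  | .prim _ => 0
  | .unop _ l => 1 + depth l
  | .binop _ l₁ l₂ => 1 + max (depth l₁) (depth l₂)
  | .fn _ ls => 1 + depthList ls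
  | .phi ls => 1 + depthList ls

def depthList : List (SymExpr P U B F) → ℕ
  | [] => 0
  | l :: ls => max (depth l) (depthList ls)
end

/-- The widening truncation `T_i`. -/
def trunc : ℕ → SymExpr P U B F → SymExpr P U B F
  | _, .bot => .bot
  | _, .top => .top
  | _, .prim p => .prim p
  | 0, .unop _ _ => .top
  | 0, .binop _ _ _ => .top
  | 0, .fn _ _ => .top
  | 0, .phi _ => .top
  | i + 1, .unop u l => .unop u (trunc i l)
  | i + 1, .binop b l₁ l₂ => .binop b (trunc i l₁) (trunc i l₂)
  | i + 1, .fn f ls => .fn f (ls.map (fun l => trunc i l))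
  | i + 1, .phi ls => .phi (ls.map (fun l => trunc i l))

end SymExpr

namespace SymExpr
variable {P U B F : Type*}
attribute [local instance] Classical.propDecidable

lemma join_bot_left (l : SymExpr P U B F) : join .bot l = l := by simp [join]
lemma join_bot_right (l : SymExpr P U B F) : join l .bot = l := by cases l <;> simp [join]
lemma join_top_left (l : SymExpr P U B F) : join .top l = .top := by cases l <;> simp [join]
lemma join_top_right (l : SymExpr P U B F) : join l .top = .top := by cases l <;> simp [join]

lemma joinList_length (ls ls' : List (SymExpr P U B F)) :
    (joinList ls ls').length = min ls.length ls'.length := by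
  induction ls generalizing ls' with
  | nil => cases ls' <;> simp [joinList]
  | cons a as ih => cases ls' <;> simp [joinList, ih] <;> omega

lemma joinList_assoc_of (ls₁ ls₂ ls₃ : List (SymExpr P U B F))
    (ih : ∀ a ∈ ls₁, ∀ b ∈ ls₂, ∀ c ∈ ls₃, join (join a b) c = join a (join b c)) :
    joinList (joinList ls₁ ls₂) ls₃ = joinList ls₁ (joinList ls₂ ls₃) := by
  induction ls₁ generalizing ls₂ ls₃ with
  | nil => cases ls₂ <;> cases ls₃ <;> simp [joinList]
  | cons a as ihl =>
    cases ls₂ with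
    | nil => cases ls₃ <;> simp [joinList]
    | cons b bs =>
      cases ls₃ with
      | nil => simp [joinList]
      | cons c cs =>
        simp only [joinList, List.cons.injEq]
        exact ⟨ih a (by simp) b (by simp) c (by simp), ihl bs cs fun x hx y hy z hz => ih x (by simp [hx]) y (by simp [hy]) z (by simp [hz])⟩
set_option maxHeartbeats 4000000 in
theorem join_assoc_aux : ∀ (n : ℕ) (l₁ l₂ l₃ : SymExpr P U B F),
    sizeOf l₁ + sizeOf l₂ + sizeOf l₃ ≤ n →
    join (join l₁ l₂) l₃ = join l₁ (join l₂ l₃) := by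
  intro n
  induction n with
  | zero => intro l₁ l₂ l₃ h; exfalso; cases l₁ <;> simp at h <;> omega
  | succ n ih =>
    intro l₁ l₂ l₃ h
    cases l₁ <;> cases l₂ <;> cases l₃
    case prim.prim.prim p₁ p₂ p₃ =>
      by_cases h12 : p₁ = p₂ <;> by_cases h23 : p₂ = p₃ <;>
        simp_all [join, join_top_left, join_top_right]
    case unop.unop.unop u₁ x₁ u₂ x₂ u₃ x₃ =>
      have hx : join (join x₁ x₂) x₃ = join x₁ (join x₂ x₃) := by
        refine ih _ _ _ ?_; simp at h; omega
      by_cases h12 : u₁ = u₂ <;> by_cases h23 : u₂ = u₃ <;>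
        simp_all [join, join_top_left, join_top_right]
    case binop.binop.binop b₁ x₁ y₁ b₂ x₂ y₂ b₃ x₃ y₃ =>
      have hx : join (join x₁ x₂) x₃ = join x₁ (join x₂ x₃) := by
        refine ih _ _ _ ?_; simp at h; omega
      have hy : join (join y₁ y₂) y₃ = join y₁ (join y₂ y₃) := by
        refine ih _ _ _ ?_; simp at h; omega
      by_cases h12 : b₁ = b₂ <;> by_cases h23 : b₂ = b₃ <;>
        simp_all [join, join_top_left, join_top_right]
    case fn.fn.fn f₁ ls₁ f₂ ls₂ f₃ ls₃ =>
      have hs : ∀ a ∈ ls₁, ∀ b ∈ ls₂, ∀ c ∈ ls₃,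
          join (join a b) c = join a (join b c) := by
        intro a ha b hb c hc
        refine ih a b c ?_
        have h1 := List.sizeOf_lt_of_mem ha
        have h2 := List.sizeOf_lt_of_mem hb
        have h3 := List.sizeOf_lt_of_mem hc
        simp at h; omega
      simp only [join]
      rcases Classical.em (f₁ = f₂ ∧ ls₁.length = ls₂.length) with h12 | h12 <;>
        rcases Classical.em (f₂ = f₃ ∧ ls₂.length = ls₃.length) with h23 | h23
      · rw [if_pos h12, if_pos h23]
        obtain ⟨rfl, e12⟩ := h12; obtain ⟨rfl, e23⟩ := h23
        simp only [join]
        rw [if_pos (by simp only [joinList_length, eq_self_iff_true, true_and]; omega),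
            if_pos (by simp only [joinList_length, eq_self_iff_true, true_and]; omega)]
        exact congrArg _ (joinList_assoc_of _ _ _ hs)
      · rw [if_pos h12, if_neg h23]
        obtain ⟨rfl, e12⟩ := h12
        simp only [join, join_top_right]
        rw [if_neg (by rw [joinList_length]
                       rintro ⟨hf, hl⟩; exact h23 ⟨hf, by omega⟩)]
      · rw [if_neg h12, if_pos h23]
        obtain ⟨rfl, e23⟩ := h23
        simp only [join, join_top_left]
        rw [if_neg (by rw [joinList_length]
                       rintro ⟨hf, hl⟩; exact h12 ⟨hf, by omega⟩)]
      · rw [if_neg h12, if_neg h23]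
        simp [join, join_top_left, join_top_right]
    case phi.phi.phi ls₁ ls₂ ls₃ =>
      have hs : ∀ a ∈ ls₁, ∀ b ∈ ls₂, ∀ c ∈ ls₃,
          join (join a b) c = join a (join b c) := by
        intro a ha b hb c hc
        refine ih a b c ?_
        have h1 := List.sizeOf_lt_of_mem ha
        have h2 := List.sizeOf_lt_of_mem hb
        have h3 := List.sizeOf_lt_of_mem hc
        simp at h; omega
      simp only [join]
      rcases Classical.em (ls₁.length = ls₂.length) with h12 | h12 <;>
        rcases Classical.em (ls₂.length = ls₃.length) with h23 | h23
      · rw [if_pos h12, if_pos h23]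
        simp only [join]
        rw [if_pos (by rw [joinList_length]; omega),
            if_pos (by rw [joinList_length]; omega)]
        exact congrArg _ (joinList_assoc_of _ _ _ hs)
      · rw [if_pos h12, if_neg h23]
        simp only [join, join_top_right]
        rw [if_neg (by rw [joinList_length]; omega)]
      · rw [if_neg h12, if_pos h23]
        simp only [join, join_top_left]
        rw [if_neg (by rw [joinList_length]; omega)]
      · rw [if_neg h12, if_neg h23]
        simp [join, join_top_left, join_top_right]
    all_goals
      try simp only [join, join_bot_left, join_bot_right, join_top_left, join_top_right]
    all_goals try (split_ifs <;>
      simp_all only [join, join_top_left, join_top_right, join_bot_right] <;> try rfl)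

end SymExpr

/-- the join is associative. -/
theorem SymExpr.join_assoc {P U B F : Type*} (l₁ l₂ l₃ : SymExpr P U B F) :
    (l₁.join l₂).join l₃ = l₁.join (l₂.join l₃) := by
  exact SymExpr.join_assoc_aux _ l₁ l₂ l₃ le_rfl
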